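/- The oblique projector S annihilates P on the right: S P = 0, and equivalently P Sᵀ = 0. -/

import Mathlib

open Matrix

private lemma dot_self_nonneg {n : ℕ} (v : Fin n → ℝ) : 0 ≤ v ⬝ᵥ v := by
  unfold dotProduct
  exact Finset.sum_nonneg fun i _ => mul_self_nonneg _

private lemma dot_self_pos {n : ℕ} (v : Fin n → ℝ) (hv : v ≠ 0) : 0 < v ⬝ᵥ v := by
  rcases (dot_self_nonneg v).lt_or_eq with h | h
  · exact h
  · exfalso; exact hv ((dotProduct_self_eq_zero).mp h.symm)

private lemma Mc_posdef {n : ℕ}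
    (M P : Matrix (Fin n) (Fin n) ℝ) (hM : M.PosDef)
    (hP : P * P = P) (hPt : Pᵀ = P) (ν : ℝ) (hν : 0 < ν) :
    (P * M * P + ν • ((1 : Matrix (Fin n) (Fin n) ℝ) - P)).PosDef := by
  rw [posDef_iff_dotProduct_mulVec]
  constructor
  · unfold Matrix.IsHermitian
    have h1 : (P * M * P)ᴴ = P * M * P := by
      rw [conjTranspose_mul, conjTranspose_mul]
      have : Pᴴ = P := by
        rw [conjTranspose_eq_transpose_of_trivial]; exact hPt
      rw [this, Matrix.IsHermitian.eq hM.1, mul_assoc]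
    have h2 : ((1 : Matrix (Fin n) (Fin n) ℝ) - P)ᴴ = 1 - P := by
      rw [conjTranspose_sub, conjTranspose_one]
      have : Pᴴ = P := by rw [conjTranspose_eq_transpose_of_trivial]; exact hPt
      rw [this]
    rw [conjTranspose_add, h1, conjTranspose_smul, h2]
    simp
  · intro x hx
    have hQ : ∀ y : Fin n → ℝ, y ⬝ᵥ ((P * M * P) *ᵥ y)
        = (P *ᵥ y) ⬝ᵥ (M *ᵥ (P *ᵥ y)) := by
      intro y
      have hyP : y ᵥ* P = P *ᵥ y := by
        conv_lhs => rw [← hPt]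
        rw [vecMul_transpose]
      rw [← mulVec_mulVec, ← mulVec_mulVec, Matrix.dotProduct_mulVec, hyP]
    have h1P : ∀ y : Fin n → ℝ, y ⬝ᵥ (((1 : Matrix (Fin n) (Fin n) ℝ) - P) *ᵥ y)
        = ((1 - P) *ᵥ y) ⬝ᵥ ((1 - P) *ᵥ y) := by
      intro y
      have hidem : ((1 : Matrix (Fin n) (Fin n) ℝ) - P) * (1 - P) = 1 - P := by
        rw [mul_sub, sub_mul, sub_mul, hP]; simp
      conv_lhs => rw [← hidem, ← mulVec_mulVec]
      rw [Matrix.dotProduct_mulVec, ← vecMul_transpose]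
      congr 1
      rw [transpose_sub, transpose_one, hPt]
    simp only [star_trivial, add_mulVec, dotProduct_add, smul_mulVec,
      dotProduct_smul, smul_eq_mul]
    by_cases hPx : P *ᵥ x = 0
    · have hfirst : x ⬝ᵥ ((P * M * P) *ᵥ x) = 0 := by
        rw [hQ, hPx]; simp
      have hsub : ((1 : Matrix (Fin n) (Fin n) ℝ) - P) *ᵥ x = x := by
        rw [sub_mulVec, one_mulVec, hPx, sub_zero]
      rw [hfirst, h1P, hsub, zero_add]
      exact mul_pos hν (dot_self_pos x hx)
    · have hfirst : 0 < x ⬝ᵥ ((P * M * P) *ᵥ x) := by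
        rw [hQ]
        have := hM.dotProduct_mulVec_pos hPx
        simpa using this
      have hsecond : 0 ≤ ν * (x ⬝ᵥ (((1 : Matrix (Fin n) (Fin n) ℝ) - P) *ᵥ x)) := by
        rw [h1P]
        exact mul_nonneg hν.le (dot_self_nonneg _)
      linarith

theorem S_annihilates_P {n : ℕ}
    (M P : Matrix (Fin n) (Fin n) ℝ) (hM : M.PosDef)
    (hP : P * P = P) (hPt : Pᵀ = P) (ν : ℝ) (hν : 0 < ν)
    (Mc S : Matrix (Fin n) (Fin n) ℝ)
    (hMc : Mc = P * M * P + ν • (1 - P)) (hS : S = 1 - Mc⁻¹ * P * M) :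
    S * P = 0 ∧ P * Sᵀ = 0 := by
  have hpd : Mc.PosDef := hMc ▸ Mc_posdef M P hM hP hPt ν hν
  have hinv : Mc⁻¹ * Mc = 1 := Matrix.nonsing_inv_mul Mc (isUnit_iff_ne_zero.mpr hpd.det_pos.ne')
  have hMcP : Mc * P = P * M * P := by
    rw [hMc, add_mul, smul_mul_assoc, sub_mul, one_mul, hP, sub_self, smul_zero,
      add_zero, mul_assoc, mul_assoc, hP, mul_assoc]
  have hSP : S * P = 0 := by
    rw [hS, sub_mul, one_mul, mul_assoc, mul_assoc, ← mul_assoc P M P, ← hMcP,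
      ← mul_assoc, hinv, one_mul, sub_self]
  refine ⟨hSP, ?_⟩
  calc P * Sᵀ = (S * Pᵀ)ᵀ := by rw [transpose_mul, transpose_transpose]
    _ = (S * P)ᵀ := by rw [hPt]
    _ = 0 := by rw [hSP, transpose_zero]
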